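/- arXiv:2510.18994 — 6 statements merged into one kernel-verified Lean document; each statement's English description precedes it below -/
import Mathlib

section
/- Let θ be a real number with sin θ ≠ 0 and sin 2θ ≠ 0. Then for every natural number ν, ∑_{j=0}^{⌊ν/2⌋} sin((2(ν − 2j) + 1)θ)/sin θ = sin((ν+2)θ)·sin((ν+1)θ)/(sin θ · sin 2θ). -/
lemma symSq_key (θ x : ℝ) :
    Real.sin ((x+4)*θ) * Real.sin ((x+3)*θ) - Real.sin ((x+2)*θ) * Real.sin ((x+1)*θ)
      = Real.sin ((2*x+5)*θ) * Real.sin (2*θ) := by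
  have e1 := Real.cos_sub_cos θ ((2*x+7)*θ)
  have e2 := Real.cos_sub_cos θ ((2*x+3)*θ)
  have e3 := Real.cos_sub_cos ((2*x+3)*θ) ((2*x+7)*θ)
  rw [show (θ + (2*x+7)*θ)/2 = (x+4)*θ by ring,
      show (θ - (2*x+7)*θ)/2 = -((x+3)*θ) by ring, Real.sin_neg] at e1
  rw [show (θ + (2*x+3)*θ)/2 = (x+2)*θ by ring,
      show (θ - (2*x+3)*θ)/2 = -((x+1)*θ) by ring, Real.sin_neg] at e2
  rw [show ((2*x+3)*θ + (2*x+7)*θ)/2 = (2*x+5)*θ by ring,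
      show ((2*x+3)*θ - (2*x+7)*θ)/2 = -(2*θ) by ring, Real.sin_neg] at e3
  nlinarith [e1, e2, e3]

theorem symSq_prime_power_closed_form (θ : ℝ) (h1 : Real.sin θ ≠ 0)
    (h2 : Real.sin (2 * θ) ≠ 0) (ν : ℕ) :
    ∑ j ∈ Finset.range (ν / 2 + 1),
        Real.sin (((2 * (ν - 2 * j) + 1 : ℕ) : ℝ) * θ) / Real.sin θ =
      Real.sin (((ν : ℝ) + 2) * θ) * Real.sin (((ν : ℝ) + 1) * θ) /
        (Real.sin θ * Real.sin (2 * θ)) := by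
  induction ν using Nat.twoStepInduction with
  | zero =>
    rw [show (0:ℕ)/2+1 = 1 from rfl, Finset.sum_range_one]
    norm_num
    field_simp
  | one =>
    rw [show (1:ℕ)/2+1 = 1 from rfl, Finset.sum_range_one]
    norm_num
    field_simp
    ring_nf
    rw [mul_assoc, mul_inv_cancel₀ (by rwa [mul_comm] at h2), mul_one]
  | more n ih _ =>
    rw [show (n+2)/2+1 = (n/2+1)+1 by omega, Finset.sum_range_succ']
    have hsum : ∑ j ∈ Finset.range (n / 2 + 1),
        Real.sin (((2 * (n + 2 - 2 * (j+1)) + 1 : ℕ) : ℝ) * θ) / Real.sin θ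
        = ∑ j ∈ Finset.range (n / 2 + 1),
        Real.sin (((2 * (n - 2 * j) + 1 : ℕ) : ℝ) * θ) / Real.sin θ := by
      refine Finset.sum_congr rfl fun j _ => ?_
      have : n + 2 - 2 * (j+1) = n - 2 * j := by omega
      rw [this]
    rw [hsum, ih]
    have h0 : ((2 * (n + 2 - 2 * 0) + 1 : ℕ) : ℝ) = 2*(n:ℝ)+5 := by push_cast; ring
    rw [h0]
    have hk := symSq_key θ (n : ℝ)
    push_cast
    rw [show ((n:ℝ)+2+2)*θ = ((n:ℝ)+4)*θ by ring,
        show ((n:ℝ)+2+1)*θ = ((n:ℝ)+3)*θ by ring,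
        show Real.sin (((n:ℝ)+4)*θ) * Real.sin (((n:ℝ)+3)*θ)
          = Real.sin (((n:ℝ)+2)*θ) * Real.sin (((n:ℝ)+1)*θ)
            + Real.sin ((2*(n:ℝ)+5)*θ) * Real.sin (2*θ) from by linarith [hk]]
    field_simp
end

section
/- Let m ≥ 1 be an integer and let θ ∈ (0, π) satisfy sin(2θ) ≠ 0 and θ ∉ {π/(k+1) : 1 ≤ k ≤ m} ∪ {π − π/(k+1) : 1 ≤ k ≤ m}. If sin((ν+1)θ)·sin((ν+2)θ)/(sin θ · sin 2θ) ≥ 0 for every integer ν with 1 ≤ ν ≤ m, then sin(3θ)/sin θ ≥ 3 − 4·sin²(π/(m+2)). -/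
open Real

/-- On the interval (π/(n+1), π/n) with n ≥ 2, the window numerator is negative
and the denominator is positive. -/
lemma negwin (n : ℕ) (x : ℝ) (hn : 2 ≤ n) (h1 : Real.pi / ((n : ℝ) + 1) < x)
    (h2 : x < Real.pi / (n : ℝ)) :
    Real.sin ((n : ℝ) * x) * Real.sin (((n : ℝ) + 1) * x) < 0 ∧
      0 < Real.sin x * Real.sin (2 * x) := by
  have hnR : (0 : ℝ) < (n : ℝ) := by positivity
  have hn2R : (2 : ℝ) ≤ (n : ℝ) := by exact_mod_cast hn
  have hx0 : 0 < x := lt_trans (by positivity) h1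
  have hxhalf : x < Real.pi / 2 :=
    lt_of_lt_of_le h2 (div_le_div_of_nonneg_left Real.pi_pos.le (by norm_num) hn2R)
  have hsinx : 0 < Real.sin x :=
    Real.sin_pos_of_pos_of_lt_pi hx0 (lt_trans hxhalf (by linarith [Real.pi_pos]))
  have hsin2x : 0 < Real.sin (2 * x) :=
    Real.sin_pos_of_pos_of_lt_pi (by linarith) (by linarith)
  have hnx : (n : ℝ) * x < Real.pi := by
    have := (lt_div_iff₀ hnR).mp h2
    linarith
  have hsinnx : 0 < Real.sin ((n : ℝ) * x) :=
    Real.sin_pos_of_pos_of_lt_pi (by positivity) hnx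
  have hgt : Real.pi < ((n : ℝ) + 1) * x := by
    have := (div_lt_iff₀ (by positivity : (0:ℝ) < (n:ℝ) + 1)).mp h1
    linarith
  have hlt : ((n : ℝ) + 1) * x - Real.pi < Real.pi := by nlinarith
  have hsinn1x : Real.sin (((n : ℝ) + 1) * x) < 0 := by
    have h := Real.sin_pos_of_pos_of_lt_pi (by linarith : 0 < ((n : ℝ) + 1) * x - Real.pi) hlt
    have heq : Real.sin ((((n : ℝ) + 1) * x - Real.pi) + Real.pi)
        = -Real.sin (((n : ℝ) + 1) * x - Real.pi) := Real.sin_add_pi _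
    rw [show (((n : ℝ) + 1) * x - Real.pi) + Real.pi = ((n : ℝ) + 1) * x by ring] at heq
    linarith
  exact ⟨mul_neg_of_pos_of_neg hsinnx hsinn1x, mul_pos hsinx hsin2x⟩

lemma flipwin (n : ℕ) (φ : ℝ) :
    Real.sin ((n : ℝ) * (Real.pi - φ)) * Real.sin (((n : ℝ) + 1) * (Real.pi - φ)) =
      -(Real.sin ((n : ℝ) * φ) * Real.sin (((n : ℝ) + 1) * φ)) := by
  have h1 : (n : ℝ) * (Real.pi - φ) = (n : ℝ) * Real.pi - (n : ℝ) * φ := by ring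
  have h2 : ((n : ℝ) + 1) * (Real.pi - φ)
      = ((n + 1 : ℕ) : ℝ) * Real.pi - ((n : ℝ) + 1) * φ := by push_cast; ring
  have h3 : ((n + 1 : ℕ) : ℝ) * φ = ((n : ℝ) + 1) * φ := by push_cast; ring
  rw [h1, Real.sin_nat_mul_pi_sub, h2, Real.sin_nat_mul_pi_sub]
  have hodd : ((-1 : ℝ)) ^ n * (-1 : ℝ) ^ (n + 1) = -1 := by
    rw [← pow_add]
    exact Odd.neg_one_pow ⟨n, by ring⟩
  have hr : ∀ a b : ℝ, -((-1 : ℝ) ^ n * a) * -((-1 : ℝ) ^ (n + 1) * b)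
      = ((-1 : ℝ) ^ n * (-1 : ℝ) ^ (n + 1)) * (a * b) := by intros; ring
  rw [hr, hodd]
  ring

theorem symSq_first_window_lower_bound (m : ℕ) (hm : 1 ≤ m) (θ : ℝ)
    (hθ : θ ∈ Set.Ioo 0 Real.pi) (h2θ : Real.sin ((2 : ℝ) * θ) ≠ 0)
    (hexc : ∀ k : ℕ, 1 ≤ k → k ≤ m →
      θ ≠ Real.pi / ((k : ℝ) + 1) ∧ θ ≠ Real.pi - Real.pi / ((k : ℝ) + 1))
    (hpos : ∀ ν : ℕ, 1 ≤ ν → ν ≤ m →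
      0 ≤ Real.sin (((ν : ℝ) + 1) * θ) * Real.sin (((ν : ℝ) + 2) * θ) /
          (Real.sin θ * Real.sin (2 * θ))) :
    Real.sin (3 * θ) / Real.sin θ ≥ 3 - 4 * Real.sin (Real.pi / ((m : ℝ) + 2)) ^ 2 := by
  obtain ⟨hθ0, hθπ⟩ := hθ
  have hπ := Real.pi_pos
  have hsθ : 0 < Real.sin θ := Real.sin_pos_of_pos_of_lt_pi hθ0 hθπ
  set α := Real.pi / ((m : ℝ) + 2) with hα
  have hmR : (1 : ℝ) ≤ (m : ℝ) := by exact_mod_cast hm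
  have hα0 : 0 < α := by positivity
  have hαhalf : α < Real.pi / 2 := by
    rw [hα]
    apply div_lt_div_of_pos_left hπ (by norm_num)
    linarith
  -- main claim: sin θ ≤ sin α
  have hle : Real.sin θ ≤ Real.sin α := by
    by_contra hcon
    push_neg at hcon
    have hθα : α < θ := by
      by_contra h
      push_neg at h
      have := Real.strictMonoOn_sin.monotoneOn
        (Set.mem_Icc.mpr ⟨by linarith, by linarith⟩)
        (Set.mem_Icc.mpr ⟨by linarith, by linarith⟩) h
      linarith
    have hθα' : θ < Real.pi - α := by
      by_contra h
      push_neg at h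
      have hmono := Real.strictMonoOn_sin.monotoneOn
        (Set.mem_Icc.mpr ⟨by linarith, by linarith⟩ :
          Real.pi - θ ∈ Set.Icc (-(Real.pi/2)) (Real.pi/2))
        (Set.mem_Icc.mpr ⟨by linarith, by linarith⟩ :
          α ∈ Set.Icc (-(Real.pi/2)) (Real.pi/2))
        (by linarith)
      rw [Real.sin_pi_sub] at hmono
      linarith
    have hθne : θ ≠ Real.pi / 2 := by
      intro h
      apply h2θ
      rw [h, show (2:ℝ) * (Real.pi / 2) = Real.pi by ring, Real.sin_pi]
    rcases lt_or_gt_of_ne hθne with hlt | hgt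
    · -- θ < π/2
      set n := Nat.floor (Real.pi / θ) with hn
      have hn2 : 2 ≤ n := Nat.le_floor (by rw [le_div_iff₀ hθ0]; push_cast; linarith)
      have hnm : n < m + 2 := by
        have : Real.pi / θ < ((m + 2 : ℕ) : ℝ) := by
          rw [div_lt_iff₀ hθ0]; push_cast
          have := (div_lt_iff₀ (by linarith : (0:ℝ) < (m:ℝ)+2)).mp hθα
          linarith
        exact_mod_cast (Nat.floor_lt (by positivity)).mpr this
      have hnR : (0 : ℝ) < (n : ℝ) := by positivity
      have hb1 : Real.pi / ((n : ℝ) + 1) < θ := by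
        have h := Nat.lt_floor_add_one (Real.pi / θ)
        rw [← hn, div_lt_iff₀ hθ0] at h
        rw [div_lt_iff₀ (by positivity)]
        linarith
      have hb2 : θ ≤ Real.pi / (n : ℝ) := by
        have h := Nat.floor_le (by positivity : (0:ℝ) ≤ Real.pi / θ)
        rw [← hn, le_div_iff₀ hθ0] at h
        rw [le_div_iff₀ hnR]
        linarith
      have hne : θ ≠ Real.pi / (n : ℝ) := by
        have h := (hexc (n - 1) (by omega) (by omega)).1
        have hc : ((n - 1 : ℕ) : ℝ) + 1 = (n : ℝ) := by
          have : (1 : ℕ) ≤ n := by omega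
          push_cast [Nat.cast_sub this]
          ring
        rwa [hc] at h
      obtain ⟨hnum, hden⟩ := negwin n θ hn2 hb1 (lt_of_le_of_ne hb2 hne)
      have hP := hpos (n - 1) (by omega) (by omega)
      have hc1 : ((n - 1 : ℕ) : ℝ) + 1 = (n : ℝ) := by
        push_cast [Nat.cast_sub (by omega : (1:ℕ) ≤ n)]; ring
      have hc2 : ((n - 1 : ℕ) : ℝ) + 2 = (n : ℝ) + 1 := by
        push_cast [Nat.cast_sub (by omega : (1:ℕ) ≤ n)]; ring
      rw [hc1, hc2] at hP
      have := div_neg_of_neg_of_pos hnum hden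
      linarith
    · -- θ > π/2
      set φ := Real.pi - θ with hφ
      have hφ0 : 0 < φ := by rw [hφ]; linarith
      have hφα : α < φ := by rw [hφ]; linarith
      have hφhalf : φ < Real.pi / 2 := by rw [hφ]; linarith
      set n := Nat.floor (Real.pi / φ) with hn
      have hn2 : 2 ≤ n := Nat.le_floor (by rw [le_div_iff₀ hφ0]; push_cast; linarith)
      have hnm : n < m + 2 := by
        have : Real.pi / φ < ((m + 2 : ℕ) : ℝ) := by
          rw [div_lt_iff₀ hφ0]; push_cast
          have := (div_lt_iff₀ (by linarith : (0:ℝ) < (m:ℝ)+2)).mp hφα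
          linarith
        exact_mod_cast (Nat.floor_lt (by positivity)).mpr this
      have hnR : (0 : ℝ) < (n : ℝ) := by positivity
      have hb1 : Real.pi / ((n : ℝ) + 1) < φ := by
        have h := Nat.lt_floor_add_one (Real.pi / φ)
        rw [← hn, div_lt_iff₀ hφ0] at h
        rw [div_lt_iff₀ (by positivity)]
        linarith
      have hb2 : φ ≤ Real.pi / (n : ℝ) := by
        have h := Nat.floor_le (by positivity : (0:ℝ) ≤ Real.pi / φ)
        rw [← hn, le_div_iff₀ hφ0] at h
        rw [le_div_iff₀ hnR]
        linarith
      have hne : φ ≠ Real.pi / (n : ℝ) := by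
        have h := (hexc (n - 1) (by omega) (by omega)).2
        have hc : ((n - 1 : ℕ) : ℝ) + 1 = (n : ℝ) := by
          push_cast [Nat.cast_sub (by omega : (1:ℕ) ≤ n)]; ring
        rw [hc] at h
        intro hcon2
        apply h
        rw [hφ] at hcon2
        linarith
      obtain ⟨hnum, hden⟩ := negwin n φ hn2 hb1 (lt_of_le_of_ne hb2 hne)
      have hθeq : θ = Real.pi - φ := by rw [hφ]; ring
      -- numerator at θ
      have hnumθ : 0 < Real.sin ((n : ℝ) * θ) * Real.sin (((n : ℝ) + 1) * θ) := by
        rw [hθeq, flipwin]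
        linarith
      -- denominator at θ
      have hsθφ : Real.sin θ = Real.sin φ := by
        rw [hθeq, Real.sin_pi_sub]
      have hs2θ : Real.sin (2 * θ) = -Real.sin (2 * φ) := by
        rw [hθeq, show (2:ℝ) * (Real.pi - φ) = -(2 * φ) + 2 * Real.pi by ring,
          Real.sin_add_two_pi, Real.sin_neg]
      have hdenθ : Real.sin θ * Real.sin (2 * θ) < 0 := by
        rw [hsθφ, hs2θ]
        nlinarith
      have hP := hpos (n - 1) (by omega) (by omega)
      have hc1 : ((n - 1 : ℕ) : ℝ) + 1 = (n : ℝ) := by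
        push_cast [Nat.cast_sub (by omega : (1:ℕ) ≤ n)]; ring
      have hc2 : ((n - 1 : ℕ) : ℝ) + 2 = (n : ℝ) + 1 := by
        push_cast [Nat.cast_sub (by omega : (1:ℕ) ≤ n)]; ring
      rw [hc1, hc2] at hP
      have := div_neg_of_pos_of_neg hnumθ hdenθ
      linarith
  -- conclude
  have h3 : Real.sin (3 * θ) / Real.sin θ = 3 - 4 * Real.sin θ ^ 2 := by
    rw [Real.sin_three_mul]
    field_simp
  rw [ge_iff_le, h3]
  have hsq : Real.sin θ ^ 2 ≤ Real.sin α ^ 2 := by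
    apply pow_le_pow_left₀ hsθ.le hle
  linarith
end

section
/- Let m ≥ 1 be an integer and let θ ∈ (0, π) satisfy sin(2θ) ≠ 0 and θ ∉ {π/(k+1) : 1 ≤ k ≤ m} ∪ {π − π/(k+1) : 1 ≤ k ≤ m}. If sin((ν+1)θ)·sin((ν+2)θ)/(sin θ · sin 2θ) ≥ 0 for every integer ν with 1 ≤ ν ≤ m, then min(θ, π − θ) ≤ π/(m+2). -/
open Real

lemma aux_window (m : ℕ) (hm : 1 ≤ m) (θ : ℝ) (h0 : 0 < θ) (h2 : θ < π / 2)
    (hexc : ∀ k : ℕ, 1 ≤ k → k ≤ m → θ ≠ π / ((k : ℝ) + 1))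
    (hpos : ∀ ν : ℕ, 1 ≤ ν → ν ≤ m →
      0 ≤ Real.sin (((ν : ℝ) + 1) * θ) * Real.sin (((ν : ℝ) + 2) * θ) /
          (Real.sin θ * Real.sin (2 * θ))) :
    θ ≤ π / ((m : ℝ) + 2) := by
  by_contra h
  push_neg at h
  have hpi := Real.pi_pos
  have hθπ : θ < π := by linarith
  set x := π / θ with hx
  have hx2 : 2 < x := by
    rw [hx, lt_div_iff₀ h0]; linarith
  have hxm : x < (m : ℝ) + 2 := by
    rw [hx, div_lt_iff₀ h0]
    have : π < θ * ((m : ℝ) + 2) := by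
      have := (div_lt_iff₀ (by positivity : (0:ℝ) < (m:ℝ)+2)).mp h
      linarith
    linarith
  have hx0 : 0 ≤ x := by positivity
  set n := ⌊x⌋₊ with hn
  have hn2 : 2 ≤ n := Nat.le_floor (by exact_mod_cast hx2.le)
  have hnm : n ≤ m + 1 := by
    have : n < m + 2 := by
      rw [hn, Nat.floor_lt hx0]; exact_mod_cast hxm
    omega
  have hnx : (n : ℝ) ≤ x := Nat.floor_le hx0
  have hne : (n : ℝ) ≠ x := by
    intro he
    have hk1 : 1 ≤ n - 1 := by omega
    have hk2 : n - 1 ≤ m := by omega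
    apply hexc (n - 1) hk1 hk2
    have hcast : ((n - 1 : ℕ) : ℝ) + 1 = (n : ℝ) := by
      have : (1:ℕ) ≤ n := by omega
      push_cast [Nat.cast_sub this]; ring
    rw [hcast]
    have hnpos : (0:ℝ) < n := by positivity
    rw [eq_div_iff (ne_of_gt hnpos)]
    have : θ * x = π := by
      rw [hx]; field_simp
    rw [← he] at this; linarith [this]
  have hnlt : (n : ℝ) < x := lt_of_le_of_ne hnx hne
  have hxlt : x < (n : ℝ) + 1 := Nat.lt_floor_add_one x
  set k := n - 1 with hk
  have hk1 : 1 ≤ k := by omega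
  have hkm : k ≤ m := by omega
  have hkc : (k : ℝ) + 1 = (n : ℝ) := by
    have : (1:ℕ) ≤ n := by omega
    rw [hk]; push_cast [Nat.cast_sub this]; ring
  -- bounds on θ
  have hθx : θ * x = π := by rw [hx]; field_simp
  have hub : ((k : ℝ) + 1) * θ < π := by
    have : ((k:ℝ)+1) * θ < x * θ := by
      apply mul_lt_mul_of_pos_right _ h0
      rw [hkc]; exact hnlt
    nlinarith
  have hlb : π < ((k : ℝ) + 2) * θ := by
    have : x * θ < ((k:ℝ)+2) * θ := by
      apply mul_lt_mul_of_pos_right _ h0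
      rw [show (k:ℝ)+2 = ((k:ℝ)+1)+1 by ring, hkc]; exact hxlt
    nlinarith
  have hub2 : ((k : ℝ) + 2) * θ < 2 * π := by
    have hk1' : (1:ℝ) ≤ (k:ℝ) := by exact_mod_cast hk1
    nlinarith
  -- signs
  have sθ : 0 < Real.sin θ := Real.sin_pos_of_pos_of_lt_pi h0 hθπ
  have s2θ : 0 < Real.sin (2 * θ) :=
    Real.sin_pos_of_pos_of_lt_pi (by linarith) (by linarith)
  have sA : 0 < Real.sin (((k : ℝ) + 1) * θ) :=
    Real.sin_pos_of_pos_of_lt_pi (by positivity) hub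
  have sB : Real.sin (((k : ℝ) + 2) * θ) < 0 := by
    have h1 : 0 < Real.sin (((k : ℝ) + 2) * θ - π) :=
      Real.sin_pos_of_pos_of_lt_pi (by linarith) (by linarith)
    rw [Real.sin_sub_pi] at h1
    linarith
  have := hpos k hk1 hkm
  have hneg : Real.sin (((k : ℝ) + 1) * θ) * Real.sin (((k : ℝ) + 2) * θ) /
      (Real.sin θ * Real.sin (2 * θ)) < 0 :=
    div_neg_of_neg_of_pos (mul_neg_of_pos_of_neg sA sB) (by positivity)
  linarith

theorem hecke_angle_in_first_window (m : ℕ) (hm : 1 ≤ m) (θ : ℝ)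
    (hθ : θ ∈ Set.Ioo 0 Real.pi) (h2θ : Real.sin ((2 : ℝ) * θ) ≠ 0)
    (hexc : ∀ k : ℕ, 1 ≤ k → k ≤ m →
      θ ≠ Real.pi / ((k : ℝ) + 1) ∧ θ ≠ Real.pi - Real.pi / ((k : ℝ) + 1))
    (hpos : ∀ ν : ℕ, 1 ≤ ν → ν ≤ m →
      0 ≤ Real.sin (((ν : ℝ) + 1) * θ) * Real.sin (((ν : ℝ) + 2) * θ) /
          (Real.sin θ * Real.sin (2 * θ))) :
    min θ (Real.pi - θ) ≤ Real.pi / ((m : ℝ) + 2) := by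
  obtain ⟨h0, hπ⟩ := hθ
  have hne2 : θ ≠ π / 2 := by
    intro he
    apply h2θ
    rw [he]
    rw [show (2:ℝ) * (π/2) = π by ring, Real.sin_pi]
  rcases lt_or_gt_of_ne hne2 with hlt | hgt
  · calc min θ (π - θ) ≤ θ := min_le_left _ _
      _ ≤ π / ((m:ℝ)+2) :=
        aux_window m hm θ h0 hlt (fun k h1 h2 => (hexc k h1 h2).1) hpos
  · -- reflect: θ' = π - θ
    set θ' := π - θ with hθ'
    have h0' : 0 < θ' := by rw [hθ']; linarith
    have h2' : θ' < π / 2 := by rw [hθ']; linarith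
    have hexc' : ∀ k : ℕ, 1 ≤ k → k ≤ m → θ' ≠ π / ((k : ℝ) + 1) := by
      intro k h1 h2 he
      exact (hexc k h1 h2).2 (by rw [hθ'] at he; linarith)
    have hpos' : ∀ ν : ℕ, 1 ≤ ν → ν ≤ m →
        0 ≤ Real.sin (((ν : ℝ) + 1) * θ') * Real.sin (((ν : ℝ) + 2) * θ') /
            (Real.sin θ' * Real.sin (2 * θ')) := by
      intro ν h1 h2
      have e1 : ((ν : ℝ) + 1) * θ' = ((ν + 1 : ℕ) : ℝ) * π - ((ν : ℝ) + 1) * θ := by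
        rw [hθ']; push_cast; ring
      have e2 : ((ν : ℝ) + 2) * θ' = ((ν + 2 : ℕ) : ℝ) * π - ((ν : ℝ) + 2) * θ := by
        rw [hθ']; push_cast; ring
      have e3 : (2 : ℝ) * θ' = ((2 : ℕ) : ℝ) * π - 2 * θ := by
        rw [hθ']; push_cast; ring
      have e4 : θ' = ((1 : ℕ) : ℝ) * π - θ := by rw [hθ']; push_cast; ring
      rw [e1, e2, e3, e4, Real.sin_nat_mul_pi_sub, Real.sin_nat_mul_pi_sub,
        Real.sin_nat_mul_pi_sub, Real.sin_nat_mul_pi_sub]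
      have key : -((-1:ℝ) ^ (ν + 1) * Real.sin (((ν : ℝ) + 1) * θ)) *
            -((-1:ℝ) ^ (ν + 2) * Real.sin (((ν : ℝ) + 2) * θ)) /
            (-((-1:ℝ) ^ 1 * Real.sin θ) * -((-1:ℝ) ^ 2 * Real.sin (2 * θ))) =
          Real.sin (((ν : ℝ) + 1) * θ) * Real.sin (((ν : ℝ) + 2) * θ) /
            (Real.sin θ * Real.sin (2 * θ)) := by
        have hs : ((-1:ℝ) ^ (ν + 1)) * ((-1:ℝ) ^ (ν + 2)) = -1 := by
          rw [← pow_add]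
          have h3 : ν + 1 + (ν + 2) = 2 * (ν + 1) + 1 := by ring
          rw [h3, pow_succ, pow_mul]; norm_num
        have hnum : -((-1:ℝ) ^ (ν + 1) * Real.sin (((ν : ℝ) + 1) * θ)) *
            -((-1:ℝ) ^ (ν + 2) * Real.sin (((ν : ℝ) + 2) * θ)) =
            -(Real.sin (((ν : ℝ) + 1) * θ) * Real.sin (((ν : ℝ) + 2) * θ)) := by
          calc -((-1:ℝ) ^ (ν + 1) * Real.sin (((ν : ℝ) + 1) * θ)) *
              -((-1:ℝ) ^ (ν + 2) * Real.sin (((ν : ℝ) + 2) * θ))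
              = ((-1:ℝ) ^ (ν + 1) * (-1:ℝ) ^ (ν + 2)) *
                (Real.sin (((ν : ℝ) + 1) * θ) * Real.sin (((ν : ℝ) + 2) * θ)) := by ring
            _ = -(Real.sin (((ν : ℝ) + 1) * θ) * Real.sin (((ν : ℝ) + 2) * θ)) := by
                rw [hs]; ring
        have hden : -((-1:ℝ) ^ 1 * Real.sin θ) * -((-1:ℝ) ^ 2 * Real.sin (2 * θ)) =
            -(Real.sin θ * Real.sin (2 * θ)) := by ring
        rw [hnum, hden, neg_div_neg_eq]
      rw [key]
      exact hpos ν h1 h2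
    calc min θ (π - θ) ≤ π - θ := min_le_right _ _
      _ ≤ π / ((m:ℝ)+2) := aux_window m hm θ' h0' h2' hexc' hpos'
end

section
/- Let m ≥ 1 be an integer, C_m ≥ 0 a real constant, and let 0 < P ≤ X/2 be real numbers. Let w : ℝ → ℝ be m times continuously differentiable with w(x) = 0 for x ∉ [P, X+P], w(x) = 1 for x ∈ [2P, X], 0 ≤ w(x) ≤ 1 for all x, and |w^{(m)}(x)| ≤ C_m·P^{−m} for all x. Then there exists a constant C, depending only on m and C_m, such that for every s ∈ ℂ with 0 < Re(s) ≤ 2, the Mellin transform satisfies |𝑤̃(s)| ≤ C · P · X^{Re(s) − 1} · (X/(|s|·P))^m. -/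
open MeasureTheory Set

lemma iterZero (n : ℕ) : iteratedDeriv n (fun _ : ℝ => (0:ℝ)) = fun _ => 0 := by
  induction n with
  | zero => simp [iteratedDeriv_zero]
  | succ n ih => rw [iteratedDeriv_succ, ih]; exact deriv_const' 0

lemma iterOne {m : ℕ} (hm : 1 ≤ m) :
    iteratedDeriv m (fun _ : ℝ => (1:ℝ)) = fun _ => 0 := by
  obtain ⟨n, rfl⟩ : ∃ n, m = n + 1 := ⟨m - 1, by omega⟩
  rw [iteratedDeriv_succ', deriv_const']
  exact iterZero n

theorem mellin_transform_cutoff_bound (m : ℕ) (hm : 1 ≤ m) (Cm : ℝ) (hCm : 0 ≤ Cm) :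
    ∃ C : ℝ, ∀ (P X : ℝ), 0 < P → P ≤ X / 2 → ∀ w : ℝ → ℝ,
      ContDiff ℝ m w →
      (∀ x : ℝ, x ∉ Set.Icc P (X + P) → w x = 0) →
      (∀ x ∈ Set.Icc (2 * P) X, w x = 1) →
      (∀ x : ℝ, 0 ≤ w x ∧ w x ≤ 1) →
      (∀ x : ℝ, |iteratedDeriv m w x| ≤ Cm / P ^ m) →
      ∀ s : ℂ, 0 < s.re → s.re ≤ 2 →
        ‖∫ x in Set.Ioi (0 : ℝ), (w x : ℂ) * (x : ℂ) ^ (s - 1)‖ ≤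
          C * P * X ^ (s.re - 1) * (X / (‖s‖ * P)) ^ m := by
  refine ⟨Cm * 2 ^ (m + 2), ?_⟩
  intro P X hP hPX w hw hw0 hw1 _hwb hwm s hs1 hs2
  have h2P : 2 * P ≤ X := by linarith
  have hX : 0 < X := by linarith
  have hb : P ≤ X + P := by linarith
  have hs0 : s ≠ 0 := fun h => by simp [h] at hs1
  have habs : 0 < ‖s‖ := norm_pos_iff.mpr hs0
  have hcont : ∀ k, k ≤ m → Continuous (iteratedDeriv k w) := fun k hk =>
    hw.continuous_iteratedDeriv k (by exact_mod_cast hk)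
  -- vanishing of all iterated derivatives at/below P and at/above X+P
  have hvan_lo : ∀ k, k ≤ m → ∀ x ∈ Iic P, iteratedDeriv k w x = 0 := by
    intro k hk
    have h1 : Set.EqOn w (fun _ => (0:ℝ)) (Iio P) := fun x hx => by
      exact hw0 x (fun hc => absurd hc.1 (not_le.mpr hx))
    have h2 := h1.iteratedDeriv_of_isOpen isOpen_Iio k
    rw [iterZero k] at h2
    have h3 := h2.closure (hcont k hk) continuous_const
    rwa [closure_Iio] at h3
  have hvan_hi : ∀ k, k ≤ m → ∀ x ∈ Ici (X + P), iteratedDeriv k w x = 0 := by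
    intro k hk
    have h1 : Set.EqOn w (fun _ => (0:ℝ)) (Ioi (X + P)) := fun x hx => by
      exact hw0 x (fun hc => absurd hc.2 (not_le.mpr hx))
    have h2 := h1.iteratedDeriv_of_isOpen isOpen_Ioi k
    rw [iterZero k] at h2
    have h3 := h2.closure (hcont k hk) continuous_const
    rwa [closure_Ioi] at h3
  set b : ℝ := X + P with hbdef
  set J : ℕ → ℂ := fun k => ∫ x in P..b, ((iteratedDeriv k w x : ℝ) : ℂ) * (x:ℂ) ^ (s + k - 1)
    with hJdef
  -- integration by parts step
  have step : ∀ k, k < m → (s + k) * J k = - J (k + 1) := by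
    intro k hk
    have hsk : (s + (k:ℂ)) ≠ 0 := by
      intro h
      have : (s + (k:ℂ)).re = 0 := by rw [h]; simp
      simp only [Complex.add_re, Complex.natCast_re] at this
      have : (0:ℝ) ≤ (k:ℝ) := Nat.cast_nonneg k
      linarith
    have hu : ∀ x ∈ uIcc P b, HasDerivAt (fun y : ℝ => ((iteratedDeriv k w y : ℝ) : ℂ))
        (((iteratedDeriv (k + 1) w x : ℝ) : ℂ)) x := by
      intro x _
      have hdiff : DifferentiableAt ℝ (iteratedDeriv k w) x :=
        (hw.differentiable_iteratedDeriv k (by exact_mod_cast hk)).differentiableAt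
      have hd : HasDerivAt (iteratedDeriv k w) (iteratedDeriv (k + 1) w x) x := by
        rw [iteratedDeriv_succ]
        exact hdiff.hasDerivAt
      exact hd.ofReal_comp
    have hv : ∀ x ∈ uIcc P b, HasDerivAt (fun y : ℝ => (y:ℂ) ^ (s + k) / (s + k))
        ((x:ℂ) ^ (s + k - 1)) x := by
      intro x hx
      rw [uIcc_of_le hb] at hx
      have hxne : x ≠ 0 := ne_of_gt (lt_of_lt_of_le hP hx.1)
      have hr : (s + (k:ℂ) - 1) ≠ -1 := by
        intro h
        apply hsk
        linear_combination h
      have := hasDerivAt_ofReal_cpow_const' hxne hr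
      rw [show s + (k:ℂ) - 1 + 1 = s + k by ring] at this
      exact this
    have hu' : IntervalIntegrable (fun x : ℝ => ((iteratedDeriv (k + 1) w x : ℝ) : ℂ))
        volume P b :=
      (Complex.continuous_ofReal.comp (hcont (k + 1) hk)).intervalIntegrable P b
    have hv' : IntervalIntegrable (fun x : ℝ => (x:ℂ) ^ (s + k - 1)) volume P b := by
      apply ContinuousOn.intervalIntegrable
      intro x hx
      rw [uIcc_of_le hb] at hx
      have hxne : x ≠ 0 := ne_of_gt (lt_of_lt_of_le hP hx.1)
      exact (Complex.continuousAt_ofReal_cpow_const x _ (Or.inr hxne)).continuousWithinAt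
    have ibp := intervalIntegral.integral_mul_deriv_eq_deriv_mul hu hv hu' hv'
    have hua : iteratedDeriv k w P = 0 := hvan_lo k (le_of_lt hk) P (by simp)
    have hub : iteratedDeriv k w b = 0 := hvan_hi k (le_of_lt hk) b (by simp)
    rw [hua, hub] at ibp
    simp only [Complex.ofReal_zero, zero_mul, sub_zero, zero_sub] at ibp
    have hJk : J k = - ∫ x in P..b,
        ((iteratedDeriv (k + 1) w x : ℝ) : ℂ) * ((x:ℂ) ^ (s + k) / (s + k)) := ibp
    have hJk1 : J (k + 1) = ∫ x in P..b,
        ((iteratedDeriv (k + 1) w x : ℝ) : ℂ) * (x:ℂ) ^ (s + k) := by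
      simp only [hJdef]
      congr 1
      funext x
      congr 2
      push_cast
      ring
    rw [hJk, hJk1, mul_neg, ← intervalIntegral.integral_const_mul]
    congr 1
    congr 1
    funext x
    field_simp
  -- the iterated identity
  have key : ∀ k, k ≤ m → (∏ j ∈ Finset.range k, (s + j)) * J 0 = (-1:ℂ) ^ k * J k := by
    intro k hk
    induction k with
    | zero => simp
    | succ k ih =>
      have hk' : k < m := lt_of_lt_of_le (Nat.lt_succ_self k) hk
      rw [Finset.prod_range_succ]
      calc (∏ j ∈ Finset.range k, (s + j)) * (s + k) * J 0
          = (s + k) * ((∏ j ∈ Finset.range k, (s + j)) * J 0) := by ring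
        _ = (s + k) * ((-1:ℂ) ^ k * J k) := by rw [ih (le_of_lt hk')]
        _ = (-1:ℂ) ^ k * ((s + k) * J k) := by ring
        _ = (-1:ℂ) ^ k * (- J (k + 1)) := by rw [step k hk']
        _ = (-1:ℂ) ^ (k + 1) * J (k + 1) := by ring
  -- the Mellin integral equals J 0
  have hI : (∫ x in Set.Ioi (0:ℝ), (w x : ℂ) * (x:ℂ) ^ (s - 1)) = J 0 := by
    have h1 : ∀ x : ℝ, x ∉ Set.Ioi (0:ℝ) → (w x : ℂ) * (x:ℂ) ^ (s - 1) = 0 := by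
      intro x hx
      rw [hw0 x (fun hc => hx (lt_of_lt_of_le hP hc.1))]
      simp
    have h2 : ∀ x : ℝ, x ∉ Set.Ioc P b → (w x : ℂ) * (x:ℂ) ^ (s - 1) = 0 := by
      intro x hx
      rcases not_and_or.mp hx with h | h
      · push_neg at h
        have : w x = 0 := by
          have := hvan_lo 0 (by omega) x h
          simpa [iteratedDeriv_zero] using this
        rw [this]; simp
      · push_neg at h
        rw [hw0 x (fun hc => absurd hc.2 (not_le.mpr h))]; simp
    rw [setIntegral_eq_integral_of_forall_compl_eq_zero h1,
      ← setIntegral_eq_integral_of_forall_compl_eq_zero h2,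
      ← intervalIntegral.integral_of_le hb]
    simp only [hJdef, iteratedDeriv_zero, Nat.cast_zero, add_zero]
  -- integrability of the top integrand on subintervals
  have hfc : ∀ a c : ℝ, P ≤ a → P ≤ c →
      IntervalIntegrable (fun x : ℝ => ((iteratedDeriv m w x : ℝ) : ℂ) * (x:ℂ) ^ (s + m - 1))
        volume a c := by
    intro a c ha hc
    apply ContinuousOn.intervalIntegrable
    intro x hx
    have hxP : P ≤ x := le_trans (le_min ha hc) hx.1
    have hxne : x ≠ 0 := ne_of_gt (lt_of_lt_of_le hP hxP)
    exact ((Complex.continuous_ofReal.comp (hcont m le_rfl)).continuousAt.continuousWithinAt).mul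
      (Complex.continuousAt_ofReal_cpow_const x _ (Or.inr hxne)).continuousWithinAt
  -- split J m
  have hsplit : J m = (∫ x in P..(2*P), ((iteratedDeriv m w x : ℝ) : ℂ) * (x:ℂ) ^ (s + m - 1))
      + (∫ x in (2*P)..X, ((iteratedDeriv m w x : ℝ) : ℂ) * (x:ℂ) ^ (s + m - 1))
      + (∫ x in X..b, ((iteratedDeriv m w x : ℝ) : ℂ) * (x:ℂ) ^ (s + m - 1)) := by
    rw [intervalIntegral.integral_add_adjacent_intervals (hfc P (2*P) le_rfl (by linarith))
        (hfc (2*P) X (by linarith) (by linarith)),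
      intervalIntegral.integral_add_adjacent_intervals (hfc P X le_rfl (by linarith))
        (hfc X b (by linarith) (by linarith))]
  -- middle integral vanishes
  have hmid : (∫ x in (2*P)..X, ((iteratedDeriv m w x : ℝ) : ℂ) * (x:ℂ) ^ (s + m - 1)) = 0 := by
    rcases eq_or_lt_of_le h2P with h | h
    · rw [h, intervalIntegral.integral_same]
    · have h1 : Set.EqOn w (fun _ => (1:ℝ)) (Ioo (2*P) X) := fun x hx =>
        hw1 x ⟨le_of_lt hx.1, le_of_lt hx.2⟩
      have h2 := h1.iteratedDeriv_of_isOpen isOpen_Ioo m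
      rw [iterOne hm] at h2
      have h3 := h2.closure (hcont m le_rfl) continuous_const
      rw [closure_Ioo (ne_of_lt h)] at h3
      have h4 : Set.EqOn (fun x : ℝ => ((iteratedDeriv m w x : ℝ) : ℂ) * (x:ℂ) ^ (s + m - 1))
          (fun _ => (0:ℂ)) (uIcc (2*P) X) := by
        rw [uIcc_of_le (le_of_lt h)]
        intro x hx
        simp [h3 hx]
      rw [intervalIntegral.integral_congr h4, intervalIntegral.integral_zero]
  -- pointwise norm
  set E : ℝ := s.re + m - 1 with hEdef
  have hE : 0 ≤ E := by
    have : (1:ℝ) ≤ m := by exact_mod_cast hm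
    simp only [hEdef]; linarith
  have hre : (s + (m:ℂ) - 1).re = E := by simp [hEdef]
  have hnorm : ∀ x : ℝ, 0 < x →
      ‖((iteratedDeriv m w x : ℝ) : ℂ) * (x:ℂ) ^ (s + m - 1)‖ = |iteratedDeriv m w x| * x ^ E := by
    intro x hx
    rw [norm_mul, Complex.norm_real, Real.norm_eq_abs,
      Complex.norm_cpow_eq_rpow_re_of_pos hx, hre]
  have hPm : 0 < P ^ m := pow_pos hP m
  have hC0 : 0 ≤ Cm / P ^ m := div_nonneg hCm (le_of_lt hPm)
  -- edge bounds
  have hedge1 : ‖∫ x in P..(2*P), ((iteratedDeriv m w x : ℝ) : ℂ) * (x:ℂ) ^ (s + m - 1)‖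
      ≤ Cm / P ^ m * (2*P) ^ E * P := by
    have h := intervalIntegral.norm_integral_le_of_norm_le_const
      (C := Cm / P ^ m * (2*P) ^ E) (a := P) (b := 2*P)
      (f := fun x : ℝ => ((iteratedDeriv m w x : ℝ) : ℂ) * (x:ℂ) ^ (s + m - 1)) ?_
    · calc ‖_‖ ≤ Cm / P ^ m * (2*P) ^ E * |2*P - P| := h
        _ = Cm / P ^ m * (2*P) ^ E * P := by rw [show (2*P - P) = P by ring, abs_of_pos hP]
    · intro x hx
      rw [uIoc_of_le (by linarith)] at hx
      have hx0 : 0 < x := lt_trans hP hx.1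
      rw [hnorm x hx0]
      exact mul_le_mul (hwm x) (Real.rpow_le_rpow (le_of_lt hx0) hx.2 hE)
        (Real.rpow_nonneg (le_of_lt hx0) E) hC0
  have hedge2 : ‖∫ x in X..b, ((iteratedDeriv m w x : ℝ) : ℂ) * (x:ℂ) ^ (s + m - 1)‖
      ≤ Cm / P ^ m * b ^ E * P := by
    have h := intervalIntegral.norm_integral_le_of_norm_le_const
      (C := Cm / P ^ m * b ^ E) (a := X) (b := b)
      (f := fun x : ℝ => ((iteratedDeriv m w x : ℝ) : ℂ) * (x:ℂ) ^ (s + m - 1)) ?_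
    · calc ‖_‖ ≤ Cm / P ^ m * b ^ E * |b - X| := h
        _ = Cm / P ^ m * b ^ E * P := by rw [show (b - X) = P by simp [hbdef], abs_of_pos hP]
    · intro x hx
      rw [uIoc_of_le (by simp [hbdef]; linarith)] at hx
      have hx0 : 0 < x := by have : X < x := hx.1; linarith
      rw [hnorm x hx0]
      exact mul_le_mul (hwm x) (Real.rpow_le_rpow (le_of_lt hx0) hx.2 hE)
        (Real.rpow_nonneg (le_of_lt hx0) E) hC0
  have hJm : ‖J m‖ ≤ Cm / P ^ m * ((2*P) ^ E + b ^ E) * P := by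
    rw [hsplit, hmid, add_zero]
    calc ‖_ + _‖ ≤ ‖_‖ + ‖_‖ := norm_add_le _ _
      _ ≤ Cm / P ^ m * (2*P) ^ E * P + Cm / P ^ m * b ^ E * P := add_le_add hedge1 hedge2
      _ = Cm / P ^ m * ((2*P) ^ E + b ^ E) * P := by ring
  -- product lower bound
  have hprod : ‖s‖ ^ m ≤ ‖∏ j ∈ Finset.range m, (s + (j:ℂ))‖ := by
    rw [norm_prod]
    calc ‖s‖ ^ m = ∏ _j ∈ Finset.range m, ‖s‖ := by
          rw [Finset.prod_const, Finset.card_range]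
      _ ≤ ∏ j ∈ Finset.range m, ‖s + (j:ℂ)‖ := by
          apply Finset.prod_le_prod (fun j _ => le_of_lt habs)
          intro j _
          rw [Complex.norm_def, Complex.norm_def]
          apply Real.sqrt_le_sqrt
          simp only [Complex.normSq_apply, Complex.add_re, Complex.add_im, Complex.natCast_re,
            Complex.natCast_im, add_zero]
          have hj : (0:ℝ) ≤ (j:ℝ) := Nat.cast_nonneg j
          nlinarith
      _ ≤ _ := le_rfl
  have hp0 : 0 < ‖∏ j ∈ Finset.range m, (s + (j:ℂ))‖ :=
    lt_of_lt_of_le (pow_pos habs m) hprod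
  have hJ0 : ‖J 0‖ = ‖J m‖ / ‖∏ j ∈ Finset.range m, (s + (j:ℂ))‖ := by
    have hk := key m le_rfl
    have h := congrArg norm hk
    rw [norm_mul, norm_mul, norm_pow, norm_neg, norm_one, one_pow, one_mul] at h
    rw [eq_div_iff (ne_of_gt hp0), mul_comm]
    exact h
  rw [hI, hJ0]
  have hsm : 0 < ‖s‖ ^ m := pow_pos habs m
  calc ‖J m‖ / ‖∏ j ∈ Finset.range m, (s + (j:ℂ))‖
      ≤ (Cm / P ^ m * ((2*P) ^ E + b ^ E) * P) / ‖s‖ ^ m :=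
        div_le_div₀ (by positivity) hJm hsm hprod
    _ ≤ (Cm / P ^ m * ((2:ℝ) ^ (m + 2) * X ^ E) * P) / ‖s‖ ^ m := by
        gcongr
        have e1 : (2*P) ^ E ≤ X ^ E := Real.rpow_le_rpow (by linarith) h2P hE
        have e2 : b ^ E ≤ (2*X) ^ E := Real.rpow_le_rpow (by linarith) (by
          simp only [hbdef]; linarith) hE
        have e3 : ((2:ℝ)*X) ^ E = 2 ^ E * X ^ E := Real.mul_rpow (by norm_num) hX.le
        have e5 : (2:ℝ) ^ ((m:ℝ)+1) = (2:ℝ) ^ (m+1 : ℕ) := by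
          rw [← Real.rpow_natCast 2 (m+1)]; push_cast; ring_nf
        have e4 : (2:ℝ) ^ E ≤ (2:ℝ) ^ (m+1 : ℕ) := by
          rw [← e5]
          exact Real.rpow_le_rpow_of_exponent_le (by norm_num) (by
            simp only [hEdef]; linarith)
        have hXE : (0:ℝ) ≤ X ^ E := Real.rpow_nonneg hX.le E
        have h1 : (1:ℝ) ≤ (2:ℝ) ^ (m+1 : ℕ) := one_le_pow₀ (by norm_num : (1:ℝ) ≤ 2)
        calc (2*P) ^ E + b ^ E ≤ X ^ E + 2 ^ (m+1 : ℕ) * X ^ E := by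
              refine add_le_add e1 (e2.trans ?_)
              rw [e3]
              exact mul_le_mul_of_nonneg_right e4 hXE
          _ ≤ (2:ℝ) ^ (m + 2) * X ^ E := by nlinarith [mul_le_mul_of_nonneg_right h1 hXE, pow_succ (2:ℝ) (m+1)]
    _ = Cm * 2 ^ (m + 2) * P * X ^ (s.re - 1) * (X / (‖s‖ * P)) ^ m := by
        rw [show E = (s.re - 1) + (m:ℕ) by push_cast [hEdef]; ring,
          Real.rpow_add hX, Real.rpow_natCast, div_pow, mul_pow]
        field_simp
end

section
/- Let g, h : ℕ≥1 → ℝ be arithmetic functions and let X ≥ 1 be a real number. Suppose that g(1) = 1, that g(d) ≥ 0 for every d ≥ 1, and that ∑_{m ≤ t} h(m) ≥ 0 for every real t with 1 ≤ t ≤ X. Then ∑_{n ≤ X} (g ⋆ h)(n) ≥ ∑_{n ≤ X} h(n), where (g ⋆ h)(n) = ∑_{d | n} g(d)·h(n/d) is the Dirichlet convolution. -/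
lemma swap_sum_divisors (F : ℕ → ℕ → ℝ) (N : ℕ) :
    ∑ n ∈ Finset.Icc 1 N, ∑ p ∈ n.divisorsAntidiagonal, F p.1 p.2 =
      ∑ d ∈ Finset.Icc 1 N, ∑ m ∈ Finset.Icc 1 (N / d), F d m := by
  rw [Finset.sum_sigma', Finset.sum_sigma']
  refine Finset.sum_nbij' (fun x => ⟨x.2.1, x.2.2⟩) (fun x => ⟨x.1 * x.2, x.1, x.2⟩) ?_ ?_ ?_ ?_ ?_
  · rintro ⟨n, d, m⟩ hx
    simp only [Finset.mem_sigma, Finset.mem_Icc, Nat.mem_divisorsAntidiagonal] at hx ⊢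
    obtain ⟨⟨hn1, hnN⟩, hdm, hn0⟩ := hx
    have hd0 : 0 < d := Nat.pos_of_ne_zero (by rintro rfl; simp at hdm; omega)
    have hm0 : 0 < m := Nat.pos_of_ne_zero (by rintro rfl; simp at hdm; omega)
    refine ⟨⟨hd0, ?_⟩, hm0, ?_⟩
    · calc d ≤ d * m := Nat.le_mul_of_pos_right _ hm0
        _ = n := hdm
        _ ≤ N := hnN
    · rw [Nat.le_div_iff_mul_le hd0, mul_comm]; omega
  · rintro ⟨d, m⟩ hx
    simp only [Finset.mem_sigma, Finset.mem_Icc, Nat.mem_divisorsAntidiagonal] at hx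
    obtain ⟨⟨hd1, hdN⟩, hm1, hmN⟩ := hx
    rw [Nat.le_div_iff_mul_le (by omega), mul_comm] at hmN
    have hdm0 : 0 < d * m := by positivity
    simp only [Finset.mem_sigma, Finset.mem_Icc, Nat.mem_divisorsAntidiagonal]
    exact ⟨⟨hdm0, hmN⟩, trivial, by omega⟩
  · rintro ⟨n, d, m⟩ hx
    simp only [Finset.mem_sigma, Finset.mem_Icc, Nat.mem_divisorsAntidiagonal] at hx
    obtain ⟨_, hdm, _⟩ := hx
    simp [hdm]
  · rintro ⟨d, m⟩ _; rfl
  · rintro ⟨n, d, m⟩ _; rfl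

theorem dirichlet_convolution_positivity_transfer (g h : ℕ → ℝ) (X : ℝ) (hX : 1 ≤ X)
    (hg1 : g 1 = 1) (hg : ∀ d : ℕ, 1 ≤ d → 0 ≤ g d)
    (hh : ∀ t : ℝ, 1 ≤ t → t ≤ X → 0 ≤ ∑ m ∈ Finset.Icc 1 ⌊t⌋₊, h m) :
    ∑ n ∈ Finset.Icc 1 ⌊X⌋₊, h n ≤
      ∑ n ∈ Finset.Icc 1 ⌊X⌋₊, ∑ d ∈ n.divisors, g d * h (n / d) := by
  set N := ⌊X⌋₊ with hN
  have hN1 : 1 ≤ N := Nat.le_floor (by exact_mod_cast hX)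
  have key : ∀ n ∈ Finset.Icc 1 N, ∑ d ∈ n.divisors, g d * h (n / d) =
      ∑ p ∈ n.divisorsAntidiagonal, g p.1 * h p.2 := by
    intro n hn
    exact (Nat.sum_divisorsAntidiagonal (fun d m => g d * h m)).symm
  rw [Finset.sum_congr rfl key, swap_sum_divisors (fun d m => g d * h m) N]
  have hnn : ∀ d ∈ Finset.Icc 1 N, 0 ≤ ∑ m ∈ Finset.Icc 1 (N / d), g d * h m := by
    intro d hd
    rw [← Finset.mul_sum]
    simp only [Finset.mem_Icc] at hd
    have hd0 : (0:ℝ) < d := by exact_mod_cast hd.1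
    have hNX : (N:ℝ) ≤ X := Nat.floor_le (by linarith)
    have hdX : (d:ℝ) ≤ X := le_trans (by exact_mod_cast hd.2) hNX
    have h1 : (1:ℝ) ≤ X / d := (one_le_div hd0).2 hdX
    have hd1 : (1:ℝ) ≤ d := by exact_mod_cast hd.1
    have h2 : X / d ≤ X := by
      rw [div_le_iff₀ hd0]
      nlinarith
    have := hh (X / d) h1 h2
    rw [Nat.floor_div_natCast X d] at this
    exact mul_nonneg (hg d hd.1) this
  have h1mem : 1 ∈ Finset.Icc 1 N := Finset.mem_Icc.2 ⟨le_refl 1, hN1⟩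
  conv_rhs => rw [← Finset.add_sum_erase _ _ h1mem]
  have : ∑ m ∈ Finset.Icc 1 (N / 1), g 1 * h m = ∑ n ∈ Finset.Icc 1 N, h n := by
    simp [hg1]
  rw [this]
  have : 0 ≤ ∑ d ∈ (Finset.Icc 1 N).erase 1, ∑ m ∈ Finset.Icc 1 (N / d), g d * h m :=
    Finset.sum_nonneg fun d hd => hnn d (Finset.mem_of_mem_erase hd)
  linarith
end

section
/- Let η ≥ 1 be an integer, N ≥ 1 an integer, and let χ : ℕ≥1 → ℝ be completely multiplicative with values in {−1, 0, 1}. For s ∈ ℂ define the Euler product P(s) = ∏_{p | N} [(1 − p^{−s})(1 − χ(p)·p^{−s})]^η · ∏_{p ∤ N} [(1 − p^{−s})^η · (1 − χ(p)·p^{−s})^η · (1 + η(1 + χ(p))·p^{−s})], the products running over primes. Then the product defining P(s) converges (is multipliable) for every s with Re(s) > 1/2, and P(1) > 0. -/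
open Complex

private lemma EFaux0 (k : ℕ) : ∃ C : ℝ, 0 ≤ C ∧ ∀ z : ℂ, ‖z‖ ≤ 1 →
    ‖(1 - z) ^ k - (1 - (k : ℂ) * z)‖ ≤ C * ‖z‖ ^ 2 := by
  induction k with
  | zero => exact ⟨0, le_rfl, fun z _ => by simp⟩
  | succ k ih =>
    obtain ⟨C, hC0, hC⟩ := ih
    refine ⟨2 * C + k, by positivity, fun z hz => ?_⟩
    have key : (1 - z) ^ (k + 1) - (1 - ((k : ℂ) + 1) * z)
        = (1 - z) * ((1 - z) ^ k - (1 - (k : ℂ) * z)) + (k : ℂ) * z ^ 2 := by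
      ring
    have hcast : ((k + 1 : ℕ) : ℂ) = (k : ℂ) + 1 := by push_cast; ring
    rw [hcast, key]
    have h1 : ‖(1 - z) * ((1 - z) ^ k - (1 - (k : ℂ) * z))‖ ≤ 2 * (C * ‖z‖ ^ 2) := by
      rw [norm_mul]
      have hz2 : ‖(1 : ℂ) - z‖ ≤ 2 := by
        calc ‖(1 : ℂ) - z‖ ≤ ‖(1 : ℂ)‖ + ‖z‖ := norm_sub_le _ _
        _ ≤ 1 + 1 := by rw [norm_one]; linarith
        _ = 2 := by norm_num
      have := hC z hz
      have hn : (0:ℝ) ≤ ‖(1 - z) ^ k - (1 - (k : ℂ) * z)‖ := norm_nonneg _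
      nlinarith [norm_nonneg z]
    have h2 : ‖(k : ℂ) * z ^ 2‖ = (k : ℝ) * ‖z‖ ^ 2 := by
      rw [norm_mul, norm_pow]; norm_num
    calc ‖(1 - z) * ((1 - z) ^ k - (1 - (k : ℂ) * z)) + (k : ℂ) * z ^ 2‖
        ≤ ‖(1 - z) * ((1 - z) ^ k - (1 - (k : ℂ) * z))‖ + ‖(k : ℂ) * z ^ 2‖ := norm_add_le _ _
      _ ≤ 2 * (C * ‖z‖ ^ 2) + (k : ℝ) * ‖z‖ ^ 2 := by rw [h2]; linarith
      _ = (2 * C + k) * ‖z‖ ^ 2 := by ring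

private lemma EFaux1 (k : ℕ) : ∃ C : ℝ, 0 ≤ C ∧ ∀ z : ℂ, ‖z‖ ≤ 1 →
    ‖(1 - z) ^ k * (1 + (k : ℂ) * z) - 1‖ ≤ C * ‖z‖ ^ 2 := by
  obtain ⟨C, hC0, hC⟩ := EFaux0 k
  refine ⟨C * (1 + k) + k ^ 2, by positivity, fun z hz => ?_⟩
  have key : (1 - z) ^ k * (1 + (k : ℂ) * z) - 1
      = ((1 - z) ^ k - (1 - (k : ℂ) * z)) * (1 + (k : ℂ) * z) - (k : ℂ) ^ 2 * z ^ 2 := by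
    ring
  rw [key]
  have h1 : ‖(1 : ℂ) + (k : ℂ) * z‖ ≤ 1 + (k : ℝ) := by
    calc ‖(1 : ℂ) + (k : ℂ) * z‖ ≤ ‖(1 : ℂ)‖ + ‖(k : ℂ) * z‖ := norm_add_le _ _
      _ ≤ 1 + (k : ℝ) := by
          rw [norm_one, norm_mul]
          have : ‖(k : ℂ)‖ = (k : ℝ) := by norm_num
          rw [this]
          nlinarith [norm_nonneg z, Nat.cast_nonneg (α := ℝ) k]
  have h2 : ‖((k : ℂ)) ^ 2 * z ^ 2‖ = (k : ℝ) ^ 2 * ‖z‖ ^ 2 := by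
    rw [norm_mul, norm_pow, norm_pow]; norm_num
  have h3 := hC z hz
  calc ‖((1 - z) ^ k - (1 - (k : ℂ) * z)) * (1 + (k : ℂ) * z) - (k : ℂ) ^ 2 * z ^ 2‖
      ≤ ‖((1 - z) ^ k - (1 - (k : ℂ) * z)) * (1 + (k : ℂ) * z)‖ + ‖(k : ℂ) ^ 2 * z ^ 2‖ :=
        norm_sub_le _ _
    _ ≤ C * ‖z‖ ^ 2 * (1 + (k : ℝ)) + (k : ℝ) ^ 2 * ‖z‖ ^ 2 := by
        rw [norm_mul, h2]
        have hn : (0:ℝ) ≤ ‖(1 - z) ^ k - (1 - (k : ℂ) * z)‖ := norm_nonneg _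
        nlinarith [norm_nonneg z, Nat.cast_nonneg (α := ℝ) k]
    _ = (C * (1 + (k:ℝ)) + (k:ℝ) ^ 2) * ‖z‖ ^ 2 := by ring

private lemma EFaux2 (k : ℕ) : ∃ C : ℝ, 0 ≤ C ∧ ∀ z : ℂ, ‖z‖ ≤ 1 →
    ‖(1 - z ^ 2) ^ k - 1‖ ≤ C * ‖z‖ ^ 2 := by
  obtain ⟨C, hC0, hC⟩ := EFaux0 k
  refine ⟨C + k, by positivity, fun z hz => ?_⟩
  have hw : ‖z ^ 2‖ ≤ 1 := by
    rw [norm_pow]; nlinarith [norm_nonneg z]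
  have key : (1 - z ^ 2) ^ k - 1
      = ((1 - z ^ 2) ^ k - (1 - (k : ℂ) * z ^ 2)) - (k : ℂ) * z ^ 2 := by ring
  rw [key]
  have h1 := hC (z ^ 2) hw
  have h2 : ‖(k : ℂ) * z ^ 2‖ = (k : ℝ) * ‖z‖ ^ 2 := by
    rw [norm_mul, norm_pow]; norm_num
  have hzz : ‖z‖ ^ 2 ≤ 1 := by nlinarith [norm_nonneg z]
  have h3 : ‖z ^ 2‖ ^ 2 ≤ ‖z‖ ^ 2 := by
    rw [norm_pow]
    nlinarith [sq_nonneg (‖z‖ ^ 2)]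
  calc ‖((1 - z ^ 2) ^ k - (1 - (k : ℂ) * z ^ 2)) - (k : ℂ) * z ^ 2‖
      ≤ ‖(1 - z ^ 2) ^ k - (1 - (k : ℂ) * z ^ 2)‖ + ‖(k : ℂ) * z ^ 2‖ := norm_sub_le _ _
    _ ≤ C * ‖z‖ ^ 2 + (k : ℝ) * ‖z‖ ^ 2 := by
        rw [h2]
        have : C * ‖z ^ 2‖ ^ 2 ≤ C * ‖z‖ ^ 2 := by nlinarith
        linarith
    _ = (C + k) * ‖z‖ ^ 2 := by ring

/-- uniform bound on the non-divisor Euler factor minus 1 -/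
private lemma EFfactor_bound (η : ℕ) : ∃ C : ℝ, 0 ≤ C ∧ ∀ (c : ℝ),
    c ∈ ({-1, 0, 1} : Set ℝ) → ∀ z : ℂ, ‖z‖ ≤ 1 →
    ‖(1 - z) ^ η * (1 - (c : ℂ) * z) ^ η * (1 + (η : ℂ) * (1 + (c : ℂ)) * z) - 1‖
      ≤ C * ‖z‖ ^ 2 := by
  obtain ⟨C1, hC10, hC1⟩ := EFaux1 (2 * η)
  obtain ⟨C2, hC20, hC2⟩ := EFaux1 η
  obtain ⟨C3, hC30, hC3⟩ := EFaux2 η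
  refine ⟨C1 + C2 + C3, by positivity, fun c hc z hz => ?_⟩
  have hz2 : (0:ℝ) ≤ ‖z‖ ^ 2 := by positivity
  rcases hc with hc | hc | hc
  · -- c = -1
    subst hc
    have key : (1 - z) ^ η * (1 - ((-1 : ℝ) : ℂ) * z) ^ η
        * (1 + (η : ℂ) * (1 + ((-1 : ℝ) : ℂ)) * z) = (1 - z ^ 2) ^ η := by
      push_cast
      rw [← mul_pow]
      rw [show ((1 : ℂ) - z) * (1 - -1 * z) = 1 - z ^ 2 by ring]
      ring
    rw [key]
    have := hC3 z hz
    nlinarith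
  · -- c = 0
    subst hc
    have key : (1 - z) ^ η * (1 - ((0 : ℝ) : ℂ) * z) ^ η
        * (1 + (η : ℂ) * (1 + ((0 : ℝ) : ℂ)) * z) = (1 - z) ^ η * (1 + (η : ℂ) * z) := by
      push_cast; ring
    rw [key]
    have := hC2 z hz
    nlinarith
  · -- c = 1
    subst hc
    have key : (1 - z) ^ η * (1 - ((1 : ℝ) : ℂ) * z) ^ η
        * (1 + (η : ℂ) * (1 + ((1 : ℝ) : ℂ)) * z)
        = (1 - z) ^ (2 * η) * (1 + ((2 * η : ℕ) : ℂ) * z) := by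
      push_cast
      rw [two_mul, pow_add]
      ring
    rw [key]
    have := hC1 z hz
    nlinarith

private lemma EFsummable (η N : ℕ) (hN : 1 ≤ N) (χ : ℕ → ℝ)
    (hχval : ∀ n : ℕ, χ n ∈ ({-1, 0, 1} : Set ℝ)) (s : ℂ) (hs : 1 / 2 < s.re) :
    Summable (fun p : Nat.Primes => ‖Complex.log (
      if (p : ℕ) ∣ N then
        ((1 - ((p : ℕ) : ℂ) ^ (-s)) * (1 - (χ (p : ℕ) : ℂ) * ((p : ℕ) : ℂ) ^ (-s))) ^ η
      else
        (1 - ((p : ℕ) : ℂ) ^ (-s)) ^ η * (1 - (χ (p : ℕ) : ℂ) * ((p : ℕ) : ℂ) ^ (-s)) ^ η *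
          (1 + (η : ℂ) * (1 + (χ (p : ℕ) : ℂ)) * ((p : ℕ) : ℂ) ^ (-s)))‖) := by
  obtain ⟨C, hC0, hC⟩ := EFfactor_bound η
  set C' : ℝ := C + 1 with hC'def
  have hC' : 0 < C' := by positivity
  have hg : Summable (fun p : Nat.Primes => 3 / 2 * C' * ((p : ℕ) : ℝ) ^ (-(2 * s.re))) :=
    (Nat.Primes.summable_rpow.mpr (by linarith)).mul_left _
  refine Summable.of_norm_bounded_eventually hg ?_
  rw [Filter.eventually_cofinite]
  set K : ℕ := max N ⌈2 * C'⌉₊ with hK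
  apply Set.Finite.subset (Set.Finite.preimage
    (Nat.Primes.coe_nat_injective.injOn) (Set.finite_Iic K))
  intro p hp
  simp only [Set.mem_preimage, Set.mem_Iic]
  by_contra hcon
  push_neg at hcon
  have hKp : N < (p : ℕ) ∧ ⌈2 * C'⌉₊ < (p : ℕ) := by
    constructor <;> [exact lt_of_le_of_lt (le_max_left _ _) hcon;
      exact lt_of_le_of_lt (le_max_right _ _) hcon]
  have hpN : ¬ (p : ℕ) ∣ N := fun h => absurd (Nat.le_of_dvd hN h) (by omega)
  have hgt0 : 2 * C' < ((p : ℕ) : ℝ) :=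
    lt_of_le_of_lt (Nat.le_ceil _) (by exact_mod_cast hKp.2)
  apply hp
  rw [norm_norm, if_neg hpN]
  have hp2 : 2 ≤ (p : ℕ) := p.prop.two_le
  have hn0 : (0 : ℝ) < ((p : ℕ) : ℝ) := by
    have : (0 : ℕ) < (p : ℕ) := by omega
    exact_mod_cast this
  set z : ℂ := ((p : ℕ) : ℂ) ^ (-s) with hzdef
  have hz : ‖z‖ = ((p : ℕ) : ℝ) ^ (-s.re) := by
    rw [hzdef, Complex.norm_natCast_cpow_of_pos (by omega), neg_re]
  have hz1 : ‖z‖ ≤ 1 := by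
    rw [hz]
    exact Real.rpow_le_one_of_one_le_of_nonpos (by exact_mod_cast Nat.one_le_of_lt hp2)
      (by linarith)
  have hsq : ‖z‖ ^ 2 = ((p : ℕ) : ℝ) ^ (-(2 * s.re)) := by
    rw [hz, sq, ← Real.rpow_add hn0]
    congr 1
    ring
  have hbound := hC (χ (p : ℕ)) (hχval (p : ℕ)) z hz1
  have hgt : 2 * C' < ((p : ℕ) : ℝ) ^ (2 * s.re) := by
    calc 2 * C' < ((p : ℕ) : ℝ) := hgt0
      _ = ((p : ℕ) : ℝ) ^ (1 : ℝ) := (Real.rpow_one _).symm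
      _ ≤ ((p : ℕ) : ℝ) ^ (2 * s.re) :=
          Real.rpow_le_rpow_of_exponent_le (by exact_mod_cast Nat.one_le_of_lt hp2)
            (by linarith)
  have hle : ((p : ℕ) : ℝ) ^ (-(2 * s.re)) ≤ 1 / (2 * C') := by
    rw [Real.rpow_neg hn0.le, one_div]
    exact inv_anti₀ (by positivity) hgt.le
  have hhalf : C' * ‖z‖ ^ 2 ≤ 1 / 2 := by
    rw [hsq]
    calc C' * ((p : ℕ) : ℝ) ^ (-(2 * s.re)) ≤ C' * (1 / (2 * C')) := by nlinarith
      _ = 1 / 2 := by field_simp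
  set w : ℂ := (1 - z) ^ η * (1 - (χ (p : ℕ) : ℂ) * z) ^ η
      * (1 + (η : ℂ) * (1 + (χ (p : ℕ) : ℂ)) * z) with hwdef
  have hsmall : ‖w - 1‖ ≤ 1 / 2 := by
    have h2 : (0 : ℝ) ≤ ‖z‖ ^ 2 := by positivity
    nlinarith
  have hrw : w = 1 + (w - 1) := by ring
  rw [hrw]
  calc ‖Complex.log (1 + (w - 1))‖ ≤ 3 / 2 * ‖w - 1‖ :=
        Complex.norm_log_one_add_half_le_self hsmall
    _ ≤ 3 / 2 * C' * ((p : ℕ) : ℝ) ^ (-(2 * s.re)) := by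
        rw [← hsq]
        have h2 : (0 : ℝ) ≤ ‖z‖ ^ 2 := by positivity
        nlinarith



theorem euler_factor_product_converges_and_positive (η N : ℕ) (hη : 1 ≤ η) (hN : 1 ≤ N)
    (χ : ℕ → ℝ) (hχ1 : χ 1 = 1) (hχmul : ∀ m n : ℕ, χ (m * n) = χ m * χ n)
    (hχval : ∀ n : ℕ, χ n ∈ ({-1, 0, 1} : Set ℝ)) :
    (∀ s : ℂ, 1 / 2 < s.re →
      Multipliable (fun p : Nat.Primes =>
        if (p : ℕ) ∣ N then
          ((1 - ((p : ℕ) : ℂ) ^ (-s)) * (1 - (χ (p : ℕ) : ℂ) * ((p : ℕ) : ℂ) ^ (-s))) ^ η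
        else
          (1 - ((p : ℕ) : ℂ) ^ (-s)) ^ η * (1 - (χ (p : ℕ) : ℂ) * ((p : ℕ) : ℂ) ^ (-s)) ^ η *
            (1 + (η : ℂ) * (1 + (χ (p : ℕ) : ℂ)) * ((p : ℕ) : ℂ) ^ (-s)))) ∧
    0 < ∏' p : Nat.Primes,
        (if (p : ℕ) ∣ N then
          ((1 - 1 / ((p : ℕ) : ℝ)) * (1 - χ (p : ℕ) / ((p : ℕ) : ℝ))) ^ η
        else
          (1 - 1 / ((p : ℕ) : ℝ)) ^ η * (1 - χ (p : ℕ) / ((p : ℕ) : ℝ)) ^ η *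
            (1 + (η : ℝ) * (1 + χ (p : ℕ)) / ((p : ℕ) : ℝ))) := by
  constructor
  · intro s hs
    set F : Nat.Primes → ℂ := fun p =>
        if (p : ℕ) ∣ N then
          ((1 - ((p : ℕ) : ℂ) ^ (-s)) * (1 - (χ (p : ℕ) : ℂ) * ((p : ℕ) : ℂ) ^ (-s))) ^ η
        else
          (1 - ((p : ℕ) : ℂ) ^ (-s)) ^ η * (1 - (χ (p : ℕ) : ℂ) * ((p : ℕ) : ℂ) ^ (-s)) ^ η *
            (1 + (η : ℂ) * (1 + (χ (p : ℕ) : ℂ)) * ((p : ℕ) : ℂ) ^ (-s)) with hFdef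
    by_cases hF : ∀ p : Nat.Primes, F p ≠ 0
    · have hsum : Summable (fun p : Nat.Primes => Complex.log (F p)) :=
        (EFsummable η N hN χ hχval s hs).of_norm
      exact Complex.multipliable_of_summable_log hsum
    · push_neg at hF
      obtain ⟨p0, hp0⟩ := hF
      refine ⟨0, ?_⟩
      rw [HasProd]
      apply Filter.Tendsto.congr' ?_ tendsto_const_nhds
      filter_upwards [Filter.eventually_ge_atTop ({p0} : Finset Nat.Primes)] with A hA
      exact (Finset.prod_eq_zero (hA (Finset.mem_singleton_self p0)) hp0).symm
  · set G : Nat.Primes → ℝ := fun p =>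
        if (p : ℕ) ∣ N then
          ((1 - 1 / ((p : ℕ) : ℝ)) * (1 - χ (p : ℕ) / ((p : ℕ) : ℝ))) ^ η
        else
          (1 - 1 / ((p : ℕ) : ℝ)) ^ η * (1 - χ (p : ℕ) / ((p : ℕ) : ℝ)) ^ η *
            (1 + (η : ℝ) * (1 + χ (p : ℕ)) / ((p : ℕ) : ℝ)) with hGdef
    have hGpos : ∀ p : Nat.Primes, 0 < G p := by
      intro p
      have hp2 : 2 ≤ (p : ℕ) := p.prop.two_le
      have hn2 : (2 : ℝ) ≤ ((p : ℕ) : ℝ) := by exact_mod_cast hp2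
      have hn0 : (0 : ℝ) < ((p : ℕ) : ℝ) := by linarith
      have hmem := hχval (p : ℕ)
      simp only [Set.mem_insert_iff, Set.mem_singleton_iff] at hmem
      have hcl : -1 ≤ χ (p : ℕ) ∧ χ (p : ℕ) ≤ 1 := by
        rcases hmem with h | h | h <;> rw [h] <;> norm_num
      have h1 : 0 < 1 - 1 / ((p : ℕ) : ℝ) := by
        have : 1 / ((p : ℕ) : ℝ) < 1 := by rw [div_lt_one hn0]; linarith
        linarith
      have h2 : 0 < 1 - χ (p : ℕ) / ((p : ℕ) : ℝ) := by
        have : χ (p : ℕ) / ((p : ℕ) : ℝ) < 1 := by rw [div_lt_one hn0]; linarith [hcl.2]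
        linarith
      have h3 : 0 < 1 + (η : ℝ) * (1 + χ (p : ℕ)) / ((p : ℕ) : ℝ) := by
        have : 0 ≤ (η : ℝ) * (1 + χ (p : ℕ)) / ((p : ℕ) : ℝ) :=
          div_nonneg (mul_nonneg (Nat.cast_nonneg _) (by linarith [hcl.1])) hn0.le
        linarith
      rw [hGdef]
      simp only
      split_ifs with h
      · exact pow_pos (mul_pos h1 h2) η
      · exact mul_pos (mul_pos (pow_pos h1 η) (pow_pos h2 η)) h3
    have hGC : ∀ p : Nat.Primes, ((G p : ℝ) : ℂ) =
        (if (p : ℕ) ∣ N then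
          ((1 - ((p : ℕ) : ℂ) ^ (-(1 : ℂ))) * (1 - (χ (p : ℕ) : ℂ) * ((p : ℕ) : ℂ) ^ (-(1 : ℂ)))) ^ η
        else
          (1 - ((p : ℕ) : ℂ) ^ (-(1 : ℂ))) ^ η * (1 - (χ (p : ℕ) : ℂ) * ((p : ℕ) : ℂ) ^ (-(1 : ℂ))) ^ η *
            (1 + (η : ℂ) * (1 + (χ (p : ℕ) : ℂ)) * ((p : ℕ) : ℂ) ^ (-(1 : ℂ)))) := by
      intro p
      have hcp : ((p : ℕ) : ℂ) ^ (-(1 : ℂ)) = (((p : ℕ) : ℂ))⁻¹ := Complex.cpow_neg_one _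
      rw [hGdef]
      simp only
      split_ifs with h
      · rw [hcp]; push_cast; ring
      · rw [hcp]; push_cast; ring
    have hs1 : 1 / 2 < (1 : ℂ).re := by simp [Complex.one_re]; norm_num
    have hS := EFsummable η N hN χ hχval 1 hs1
    have heq : ∀ p : Nat.Primes, ‖Complex.log (
        if (p : ℕ) ∣ N then
          ((1 - ((p : ℕ) : ℂ) ^ (-(1 : ℂ))) * (1 - (χ (p : ℕ) : ℂ) * ((p : ℕ) : ℂ) ^ (-(1 : ℂ)))) ^ η
        else
          (1 - ((p : ℕ) : ℂ) ^ (-(1 : ℂ))) ^ η * (1 - (χ (p : ℕ) : ℂ) * ((p : ℕ) : ℂ) ^ (-(1 : ℂ))) ^ η *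
            (1 + (η : ℂ) * (1 + (χ (p : ℕ) : ℂ)) * ((p : ℕ) : ℂ) ^ (-(1 : ℂ))))‖
        = |Real.log (G p)| := by
      intro p
      rw [← hGC p, ← Complex.ofReal_log (hGpos p).le, Complex.norm_real, Real.norm_eq_abs]
    have habs : Summable (fun p : Nat.Primes => |Real.log (G p)|) := hS.congr heq
    have hlog : Summable (fun p : Nat.Primes => Real.log (G p)) := habs.of_abs
    have h0 := Real.rexp_tsum_eq_tprod (f := G) hGpos hlog
    rw [hGdef] at h0
    rw [← h0]
    exact Real.exp_pos _
end
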